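/- Let η ∈ {+1, −1}, let q₁, q₂ be positive integers, and let h₁, h₂ be integers with gcd(h₁, q₁) = 1 and gcd(h₂, q₂) = 1. Then Σ_{γ mod q₁q₂} S(h̄₁, ηγ; q₁) · S(h̄₂, ηγ; q₂) = 0 if q₁ ≠ q₂, and if q₁ = q₂ = q it equals q² · Σ_{q' | q, h₁ ≡ h₂ (mod q')} q' · μ(q/q'), where μ is the Möbius function, h̄₁ denotes the inverse of h₁ modulo q₁ and h̄₂ the inverse of h₂ modulo q₂, and the outer sum runs over a complete residue system γ modulo q₁q₂. -/

import Mathlib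

/-- `e x = e^{2πix}`. -/
noncomputable def e (x : ℝ) : ℂ := Complex.exp (2 * (Real.pi : ℂ) * Complex.I * (x : ℂ))

noncomputable def eZ (n : ℕ) (t : ℤ) : ℂ := e ((t : ℝ) / (n : ℝ))

open Finset ArithmeticFunction

lemma e_add (x y : ℝ) : e (x + y) = e x * e y := by
  simp only [e, ← Complex.exp_add, Complex.ofReal_add]; ring_nf

lemma eZ_add (n : ℕ) (s t : ℤ) : eZ n (s + t) = eZ n s * eZ n t := by
  simp only [eZ, Int.cast_add, add_div, e_add]

lemma eZ_zero (n : ℕ) : eZ n 0 = 1 := by simp [eZ, e]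

lemma eZ_eq_one_iff {n : ℕ} (hn : 0 < n) (t : ℤ) : eZ n t = 1 ↔ (n : ℤ) ∣ t := by
  have hn' : (n : ℝ) ≠ 0 := Nat.cast_ne_zero.2 hn.ne'
  rw [eZ, e, Complex.exp_eq_one_iff]
  constructor
  · rintro ⟨m, hm⟩
    have h2 : (2 * (Real.pi : ℂ) * Complex.I) ≠ 0 := by
      simp [Real.pi_ne_zero, Complex.I_ne_zero]
    have : ((((t : ℝ) / n : ℝ)) : ℂ) = (m : ℂ) := by
      exact mul_left_cancel₀ h2 (hm.trans (mul_comm _ _))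
    have hr : (t : ℝ) / n = (m : ℝ) := by exact_mod_cast this
    have ht : (t : ℝ) = (m : ℝ) * n := by field_simp at hr; linarith [hr]
    exact ⟨m, by exact_mod_cast ht.trans (mul_comm _ _)⟩
  · rintro ⟨m, rfl⟩
    refine ⟨m, ?_⟩
    push_cast
    rw [mul_div_cancel_left₀ _ (by exact_mod_cast hn.ne' : (n:ℂ) ≠ 0)]
    ring
lemma eZ_pow (n : ℕ) (t : ℤ) (k : ℕ) : eZ n (t * k) = eZ n t ^ k := by
  induction k with
  | zero => simpa using eZ_zero n
  | succ k ih =>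
      have : t * ((k:ℤ) + 1) = t * k + t := by ring
      rw [Nat.cast_succ, this, eZ_add, ih, pow_succ]

lemma sum_eZ (n : ℕ) (hn : 0 < n) (t : ℤ) :
    ∑ γ ∈ Finset.range n, eZ n (t * γ) = if (n : ℤ) ∣ t then (n : ℂ) else 0 := by
  simp_rw [eZ_pow]
  by_cases h : (n : ℤ) ∣ t
  · rw [if_pos h, (eZ_eq_one_iff hn t).2 h]; simp
  · rw [if_neg h]
    have h1 : eZ n t ≠ 1 := fun hh => h ((eZ_eq_one_iff hn t).1 hh)
    rw [geom_sum_eq h1]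
    have hx : eZ n t ^ n = 1 := by
      rw [← eZ_pow]; exact (eZ_eq_one_iff hn _).2 ⟨t, by ring⟩
    simp [hx]

lemma eZ_scale (n m : ℕ) (hm : m ≠ 0) (t : ℤ) : eZ (n * m) (t * m) = eZ n t := by
  unfold eZ
  congr 1
  push_cast
  rw [mul_div_mul_right _ _ (by exact_mod_cast hm)]

lemma eZ_congr {n : ℕ} (hn : 0 < n) {s t : ℤ} (h : (n : ℤ) ∣ s - t) : eZ n s = eZ n t := by
  have : s = t + (s - t) := by ring
  rw [this, eZ_add, (eZ_eq_one_iff hn _).2 h, mul_one]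

lemma moebius_sum (m : ℕ) :
    (∑ d ∈ m.divisors, (moebius d : ℤ)) = if m = 1 then 1 else 0 := by
  have h : (moebius * (ArithmeticFunction.zeta : ArithmeticFunction ℤ)) m = (1 : ArithmeticFunction ℤ) m := by
    rw [ArithmeticFunction.moebius_mul_coe_zeta]
  rwa [ArithmeticFunction.coe_mul_zeta_apply, ArithmeticFunction.one_apply] at h

lemma gcd_divisors (d q : ℕ) (hq : q ≠ 0) :
    (Nat.gcd d q).divisors = q.divisors.filter (fun e => e ∣ d) := by
  ext x
  simp only [Nat.mem_divisors, Finset.mem_filter, Nat.dvd_gcd_iff]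
  constructor
  · rintro ⟨⟨h1, h2⟩, -⟩
    exact ⟨⟨h2, hq⟩, h1⟩
  · rintro ⟨⟨h2, -⟩, h1⟩
    exact ⟨⟨h1, h2⟩, Nat.gcd_ne_zero_right hq⟩

lemma sum_dvd_filter (q e : ℕ) (he : e ∣ q) (he0 : e ≠ 0) (f : ℕ → ℂ) :
    ∑ d ∈ (Finset.range q).filter (fun d => e ∣ d), f d
      = ∑ m ∈ Finset.range (q / e), f (e * m) := by
  refine Finset.sum_nbij' (fun d => d / e) (fun m => e * m) ?_ ?_ ?_ ?_ ?_
  · intro d hd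
    simp only [Finset.mem_filter, Finset.mem_range] at hd ⊢
    exact Nat.div_lt_div_of_lt_of_dvd he hd.1
  · intro m hm
    simp only [Finset.mem_range, Finset.mem_filter] at hm ⊢
    refine ⟨?_, Dvd.intro m rfl⟩
    calc e * m < e * (q / e) := (Nat.mul_lt_mul_left (Nat.pos_of_ne_zero he0)).mpr hm
    _ = q := Nat.mul_div_cancel' he
  · intro d hd
    simp only [Finset.mem_filter] at hd
    exact Nat.mul_div_cancel' hd.2
  · intro m _
    exact Nat.mul_div_cancel_left _ (Nat.pos_of_ne_zero he0)
  · intro d hd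
    simp only [Finset.mem_filter] at hd
    rw [Nat.mul_div_cancel' hd.2]

lemma ramanujan (q : ℕ) (hq : 0 < q) (t : ℤ) :
    ∑ d ∈ (Finset.range q).filter (fun d => Nat.Coprime d q), eZ q (t * d)
      = ∑ q' ∈ q.divisors.filter (fun q' : ℕ => (q' : ℤ) ∣ t),
          (q' : ℂ) * ((moebius (q / q') : ℤ) : ℂ) := by
  have hq0 : q ≠ 0 := hq.ne'
  rw [Finset.sum_filter]
  have step1 : ∀ d ∈ Finset.range q,
      (if Nat.Coprime d q then eZ q (t * d) else 0)
        = ∑ e ∈ q.divisors.filter (fun e => e ∣ d), ((moebius e : ℤ) : ℂ) * eZ q (t * d) := by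
    intro d _
    rw [← Finset.sum_mul, ← gcd_divisors d q hq0]
    have h2 : (∑ e ∈ (Nat.gcd d q).divisors, ((moebius e : ℤ) : ℂ))
        = if Nat.gcd d q = 1 then 1 else 0 := by
      rw [← Int.cast_sum, moebius_sum]
      split <;> simp
    rw [h2]
    unfold Nat.Coprime
    split <;> simp
  rw [Finset.sum_congr rfl step1]
  have step2 : ∀ d ∈ Finset.range q,
      (∑ e ∈ q.divisors.filter (fun e => e ∣ d), ((moebius e : ℤ) : ℂ) * eZ q (t * d))
        = ∑ e ∈ q.divisors, if e ∣ d then ((moebius e : ℤ) : ℂ) * eZ q (t * d) else 0 :=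
    fun d _ => Finset.sum_filter _ _
  rw [Finset.sum_congr rfl step2, Finset.sum_comm]
  have step3 : ∀ e ∈ q.divisors,
      (∑ d ∈ Finset.range q, if e ∣ d then ((moebius e : ℤ) : ℂ) * eZ q (t * d) else 0)
        = ((moebius e : ℤ) : ℂ) * (if ((q / e : ℕ) : ℤ) ∣ t then ((q / e : ℕ) : ℂ) else 0) := by
    intro e he
    rw [Nat.mem_divisors] at he
    have he0 : e ≠ 0 := fun h => by subst h; exact hq0 (Nat.eq_zero_of_zero_dvd he.1)
    have hqe : 0 < q / e := Nat.div_pos (Nat.le_of_dvd hq he.1) (Nat.pos_of_ne_zero he0)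
    rw [← Finset.sum_filter, sum_dvd_filter q e he.1 he0, ← sum_eZ (q / e) hqe t,
      Finset.mul_sum]
    refine Finset.sum_congr rfl fun m _ => ?_
    congr 1
    have hsc : eZ ((q / e) * e) ((t * m) * e) = eZ (q / e) (t * m) := eZ_scale _ _ he0 _
    rw [← hsc]
    congr 1
    · rw [Nat.div_mul_cancel he.1]
    · push_cast; ring
  rw [Finset.sum_congr rfl step3, Finset.sum_filter,
    ← Nat.sum_div_divisors q
      (fun q' => if ((q' : ℕ) : ℤ) ∣ t then (q' : ℂ) * ((moebius (q / q') : ℤ) : ℂ) else 0)]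
  refine Finset.sum_congr rfl fun d hd => ?_
  rw [Nat.mem_divisors] at hd
  rw [Nat.div_div_self hd.1 hq0]
  split
  · ring
  · simp

lemma zmod_mul_inv {q : ℕ} {d : ℕ} (hd : Nat.Coprime d q) :
    (d : ZMod q) * (d : ZMod q)⁻¹ = 1 :=
  ZMod.mul_inv_of_unit _ ((ZMod.isUnit_iff_coprime d q).mpr hd)

lemma rbar_coprime {q : ℕ} (hq : 0 < q) {d : ℕ} (hd : Nat.Coprime d q) :
    Nat.Coprime ((d : ZMod q)⁻¹).val q := by
  haveI : NeZero q := ⟨hq.ne'⟩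
  rw [← ZMod.isUnit_iff_coprime, ZMod.natCast_rightInverse _]
  exact IsUnit.of_mul_eq_one _ (by rw [mul_comm]; exact zmod_mul_inv hd)

lemma inv_int_eq {q : ℕ} (hq : 0 < q) {h a b : ℤ} (hab : a * h + b * q = 1) :
    (h : ZMod q)⁻¹ = (a : ZMod q) := by
  apply ZMod.inv_eq_of_mul_eq_one
  have h1 : ((a * h + b * q : ℤ) : ZMod q) = 1 := by rw [hab]; simp
  push_cast at h1
  rw [ZMod.natCast_self, mul_zero, add_zero, mul_comm] at h1
  exact h1

lemma val_cast_dvd {q q' : ℕ} (hq : 0 < q) (hq' : q' ∣ q) (x : ZMod q) :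
    ((x.val : ℤ) : ZMod q') = ((x.val : ℕ) : ZMod q') := by push_cast; rfl

lemma cond_iff (q q' : ℕ) (hq : 0 < q) (hq' : q' ∣ q) (h₁ h₂ : ℤ)
    (hc₁ : Int.gcd h₁ q = 1) (hc₂ : Int.gcd h₂ q = 1) :
    ((q' : ℤ) ∣ (((((h₁ : ZMod q)⁻¹).val : ℤ)) - ((((h₂ : ZMod q)⁻¹).val : ℤ))))
      ↔ h₁ % (q' : ℤ) = h₂ % (q' : ℤ) := by
  haveI : NeZero q := ⟨hq.ne'⟩
  obtain ⟨a, b, hab⟩ := Int.isCoprime_iff_gcd_eq_one.mpr hc₁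
  obtain ⟨c, d, hcd⟩ := Int.isCoprime_iff_gcd_eq_one.mpr hc₂
  have hinv₁ : (h₁ : ZMod q)⁻¹ = (a : ZMod q) := inv_int_eq hq hab
  have hinv₂ : (h₂ : ZMod q)⁻¹ = (c : ZMod q) := inv_int_eq hq hcd
  -- cast vals down to ZMod q'
  have key : ∀ (h x : ℤ), (h : ZMod q)⁻¹ = (x : ZMod q) →
      ((((h : ZMod q)⁻¹).val : ℤ) : ZMod q') = (x : ZMod q') := by
    intro h x hx
    have h0 : ((((h : ZMod q)⁻¹).val : ℕ) : ZMod q) = ((x : ℤ) : ZMod q) :=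
      (ZMod.natCast_rightInverse _).trans hx
    have hdvd : (q : ℤ) ∣ ((((h : ZMod q)⁻¹).val : ℤ) - x) := by
      rw [← ZMod.intCast_zmod_eq_zero_iff_dvd]
      push_cast
      rw [sub_eq_zero]
      exact_mod_cast h0
    have hdvd' : (q' : ℤ) ∣ ((((h : ZMod q)⁻¹).val : ℤ) - x) :=
      dvd_trans (Int.natCast_dvd_natCast.mpr hq') hdvd
    rw [← sub_eq_zero]
    rw [← ZMod.intCast_zmod_eq_zero_iff_dvd] at hdvd'
    push_cast at hdvd' ⊢
    exact hdvd'
  have k₁ := key h₁ a hinv₁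
  have k₂ := key h₂ c hinv₂
  -- units mod q'
  have hq0' : ((q : ℕ) : ZMod q') = 0 := (ZMod.natCast_eq_zero_iff q q').mpr hq'
  have e₁ : (a : ZMod q') * (h₁ : ZMod q') = 1 := by
    have h1 : ((a * h₁ + b * q : ℤ) : ZMod q') = 1 := by rw [hab]; simp
    push_cast at h1
    rw [hq0', mul_zero, add_zero] at h1
    exact h1
  have e₂ : (c : ZMod q') * (h₂ : ZMod q') = 1 := by
    have h1 : ((c * h₂ + d * q : ℤ) : ZMod q') = 1 := by rw [hcd]; simp
    push_cast at h1
    rw [hq0', mul_zero, add_zero] at h1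
    exact h1
  rw [← ZMod.intCast_eq_intCast_iff' h₁ h₂ q']
  rw [← ZMod.intCast_zmod_eq_zero_iff_dvd]
  push_cast
  rw [sub_eq_zero]
  rw [show ((((h₁ : ZMod q)⁻¹).val : ℕ) : ZMod q') = (a : ZMod q') from by exact_mod_cast k₁,
      show ((((h₂ : ZMod q)⁻¹).val : ℕ) : ZMod q') = (c : ZMod q') from by exact_mod_cast k₂]
  constructor
  · intro ha
    calc (h₁ : ZMod q') = (h₁ : ZMod q') * ((c : ZMod q') * (h₂ : ZMod q')) := by
          rw [e₂, mul_one]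
    _ = ((a : ZMod q') * (h₁ : ZMod q')) * (h₂ : ZMod q') := by rw [← ha]; ring
    _ = (h₂ : ZMod q') := by rw [e₁, one_mul]
  · intro hh
    calc (a : ZMod q') = (a : ZMod q') * ((c : ZMod q') * (h₂ : ZMod q')) := by
          rw [e₂, mul_one]
    _ = (c : ZMod q') * ((a : ZMod q') * (h₁ : ZMod q')) := by rw [← hh]; ring
    _ = (c : ZMod q') := by rw [e₁, mul_one]

lemma val_coprime {q : ℕ} (hq : 0 < q) (x : ZMod q) (hx : IsUnit x) : Nat.Coprime x.val q := by
  haveI : NeZero q := ⟨hq.ne'⟩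
  rw [← ZMod.isUnit_iff_coprime, ZMod.natCast_rightInverse _]
  exact hx

/-- The Kloosterman sum `S(a, b; c) = Σ*_{d mod c} e((ad + b·d̄)/c)`. -/
noncomputable def kloos (a b : ℤ) (c : ℕ) : ℂ :=
  ∑ d ∈ (Finset.range c).filter (fun d => Nat.Coprime d c),
    e (((a * (d : ℤ) + b * (((d : ZMod c)⁻¹).val : ℤ) : ℤ) : ℝ) / (c : ℝ))

lemma kloos_eq (a b : ℤ) (c : ℕ) :
    kloos a b c = ∑ d ∈ (Finset.range c).filter (fun d => Nat.Coprime d c),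
      eZ c (a * (d : ℤ) + b * (((d : ZMod c)⁻¹).val : ℤ)) := rfl

lemma master (q₁ q₂ : ℕ) (hq₁ : 0 < q₁) (hq₂ : 0 < q₂) (a₁ a₂ η : ℤ) :
    ∑ γ ∈ Finset.range (q₁ * q₂), kloos a₁ (η * (γ : ℤ)) q₁ * kloos a₂ (η * (γ : ℤ)) q₂
      = ∑ d₁ ∈ (Finset.range q₁).filter (fun d => Nat.Coprime d q₁),
          ∑ d₂ ∈ (Finset.range q₂).filter (fun d => Nat.Coprime d q₂),
            (if ((q₁ * q₂ : ℕ) : ℤ) ∣ ((q₂ : ℤ) * (((d₁ : ZMod q₁)⁻¹).val : ℤ)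
                  + (q₁ : ℤ) * (((d₂ : ZMod q₂)⁻¹).val : ℤ)) * η
              then ((q₁ * q₂ : ℕ) : ℂ) else 0)
              * eZ (q₁ * q₂) ((q₂ : ℤ) * (a₁ * d₁) + (q₁ : ℤ) * (a₂ * d₂)) := by
  have hN : 0 < q₁ * q₂ := Nat.mul_pos hq₁ hq₂
  have expand : ∀ γ : ℕ, kloos a₁ (η * (γ : ℤ)) q₁ * kloos a₂ (η * (γ : ℤ)) q₂
      = ∑ d₁ ∈ (Finset.range q₁).filter (fun d => Nat.Coprime d q₁),
          ∑ d₂ ∈ (Finset.range q₂).filter (fun d => Nat.Coprime d q₂),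
            eZ (q₁ * q₂) ((q₂ : ℤ) * (a₁ * d₁) + (q₁ : ℤ) * (a₂ * d₂))
              * eZ (q₁ * q₂) ((((q₂ : ℤ) * (((d₁ : ZMod q₁)⁻¹).val : ℤ)
                  + (q₁ : ℤ) * (((d₂ : ZMod q₂)⁻¹).val : ℤ)) * η) * (γ : ℤ)) := by
    intro γ
    rw [kloos_eq, kloos_eq, Finset.sum_mul_sum]
    refine Finset.sum_congr rfl fun d₁ _ => Finset.sum_congr rfl fun d₂ _ => ?_
    rw [← eZ_scale q₁ q₂ hq₂.ne', ← eZ_scale q₂ q₁ hq₁.ne', mul_comm q₂ q₁,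
      ← eZ_add, ← eZ_add]
    congr 1
    ring
  rw [Finset.sum_congr rfl fun γ _ => expand γ, Finset.sum_comm]
  refine Finset.sum_congr rfl fun d₁ _ => ?_
  rw [Finset.sum_comm]
  refine Finset.sum_congr rfl fun d₂ _ => ?_
  rw [← Finset.mul_sum, sum_eZ _ hN _, mul_comm]

/-- Diagonal (zero-frequency) correlation sum of two Kloosterman sums:
it vanishes unless `q₁ = q₂`, in which case it is a Ramanujan-type sum. -/
theorem kloosterman_correlation_zero_freq (η : ℤ) (hη : η = 1 ∨ η = -1)
    (q₁ q₂ : ℕ) (hq₁ : 0 < q₁) (hq₂ : 0 < q₂)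
    (h₁ h₂ : ℤ) (hc₁ : Int.gcd h₁ q₁ = 1) (hc₂ : Int.gcd h₂ q₂ = 1) :
    (q₁ ≠ q₂ →
      ∑ γ ∈ Finset.range (q₁ * q₂),
        kloos ((((h₁ : ZMod q₁)⁻¹).val : ℤ)) (η * (γ : ℤ)) q₁ *
          kloos ((((h₂ : ZMod q₂)⁻¹).val : ℤ)) (η * (γ : ℤ)) q₂ = 0) ∧
    (q₁ = q₂ →
      ∑ γ ∈ Finset.range (q₁ * q₂),
        kloos ((((h₁ : ZMod q₁)⁻¹).val : ℤ)) (η * (γ : ℤ)) q₁ *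
          kloos ((((h₂ : ZMod q₂)⁻¹).val : ℤ)) (η * (γ : ℤ)) q₂ =
      (q₁ : ℂ) ^ 2 *
        ∑ q' ∈ q₁.divisors.filter (fun q' : ℕ => h₁ % (q' : ℤ) = h₂ % (q' : ℤ)),
          (q' : ℂ) * ((ArithmeticFunction.moebius (q₁ / q') : ℤ) : ℂ)) := by
  have hηdvd : ∀ (m s : ℤ), (m ∣ s * η) ↔ (m ∣ s) := by
    rcases hη with rfl | rfl
    · simp
    · intro m s; rw [mul_neg_one, dvd_neg]
  constructor
  · intro hne
    rw [master q₁ q₂ hq₁ hq₂ _ _ η]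
    refine Finset.sum_eq_zero fun d₁ hd₁ => Finset.sum_eq_zero fun d₂ hd₂ => ?_
    simp only [Finset.mem_filter, Finset.mem_range] at hd₁ hd₂
    rw [if_neg, zero_mul]
    rw [hηdvd]
    intro hdvd
    set r₁ : ℤ := (((d₁ : ZMod q₁)⁻¹).val : ℤ) with hr₁
    set r₂ : ℤ := (((d₂ : ZMod q₂)⁻¹).val : ℤ) with hr₂
    have c₁ : IsCoprime (q₁ : ℤ) r₁ :=
      Nat.isCoprime_iff_coprime.mpr (rbar_coprime hq₁ hd₁.2).symm
    have c₂ : IsCoprime (q₂ : ℤ) r₂ :=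
      Nat.isCoprime_iff_coprime.mpr (rbar_coprime hq₂ hd₂.2).symm
    have h1 : (q₁ : ℤ) ∣ ((q₂ : ℤ) * r₁ + (q₁ : ℤ) * r₂) :=
      dvd_trans ⟨(q₂ : ℤ), by push_cast; ring⟩ hdvd
    have h1' : (q₂ : ℤ) ∣ ((q₂ : ℤ) * r₁ + (q₁ : ℤ) * r₂) :=
      dvd_trans ⟨(q₁ : ℤ), by push_cast; ring⟩ hdvd
    have h2 : (q₁ : ℤ) ∣ (q₂ : ℤ) * r₁ := by
      have := dvd_sub h1 (⟨r₂, rfl⟩ : (q₁ : ℤ) ∣ (q₁ : ℤ) * r₂)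
      simpa using this
    have h2' : (q₂ : ℤ) ∣ (q₁ : ℤ) * r₂ := by
      have := dvd_sub h1' (⟨r₁, rfl⟩ : (q₂ : ℤ) ∣ (q₂ : ℤ) * r₁)
      simpa using this
    have d12 : q₁ ∣ q₂ := Int.natCast_dvd_natCast.mp (c₁.dvd_of_dvd_mul_right h2)
    have d21 : q₂ ∣ q₁ := Int.natCast_dvd_natCast.mp (c₂.dvd_of_dvd_mul_right h2')
    exact hne (Nat.dvd_antisymm d12 d21)
  · intro heq
    subst heq
    haveI : NeZero q₁ := ⟨hq₁.ne'⟩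
    set a₁ : ℤ := (((h₁ : ZMod q₁)⁻¹).val : ℤ) with ha₁
    set a₂ : ℤ := (((h₂ : ZMod q₁)⁻¹).val : ℤ) with ha₂
    rw [master q₁ q₁ hq₁ hq₁ a₁ a₂ η]
    have hq₁' : (q₁ : ℤ) ≠ 0 := by exact_mod_cast hq₁.ne'
    have hcond : ∀ x y : ℤ,
        (((q₁ * q₁ : ℕ) : ℤ) ∣ ((q₁ : ℤ) * x + (q₁ : ℤ) * y) * η) ↔ ((q₁ : ℤ) ∣ x + y) := by
      intro x y
      rw [hηdvd, show ((q₁ * q₁ : ℕ) : ℤ) = (q₁ : ℤ) * q₁ from by push_cast; ring,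
        show (q₁ : ℤ) * x + (q₁ : ℤ) * y = (q₁ : ℤ) * (x + y) from by ring,
        mul_dvd_mul_iff_left hq₁']
    have step : ∀ d₁ ∈ (Finset.range q₁).filter (fun d => Nat.Coprime d q₁),
        (∑ d₂ ∈ (Finset.range q₁).filter (fun d => Nat.Coprime d q₁),
          (if ((q₁ * q₁ : ℕ) : ℤ) ∣ ((q₁ : ℤ) * (((d₁ : ZMod q₁)⁻¹).val : ℤ)
                + (q₁ : ℤ) * (((d₂ : ZMod q₁)⁻¹).val : ℤ)) * η
            then ((q₁ * q₁ : ℕ) : ℂ) else 0)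
            * eZ (q₁ * q₁) ((q₁ : ℤ) * (a₁ * d₁) + (q₁ : ℤ) * (a₂ * d₂)))
          = ((q₁ * q₁ : ℕ) : ℂ) * eZ q₁ ((a₁ - a₂) * d₁) := by
      intro d₁ hd₁
      simp only [Finset.mem_filter, Finset.mem_range] at hd₁
      have hv : (d₁ : ZMod q₁) * (d₁ : ZMod q₁)⁻¹ = 1 := zmod_mul_inv hd₁.2
      set w : ZMod q₁ := -(d₁ : ZMod q₁) with hw
      have hwinv : w⁻¹ = -((d₁ : ZMod q₁)⁻¹) := by
        apply ZMod.inv_eq_of_mul_eq_one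
        rw [hw, neg_mul_neg]; exact hv
      have hwunit : IsUnit w := by
        refine IsUnit.of_mul_eq_one (-((d₁ : ZMod q₁)⁻¹)) ?_
        rw [hw, neg_mul_neg]; exact hv
      set b := w.val with hb
      have hbz : ((b : ℕ) : ZMod q₁) = w := ZMod.natCast_rightInverse w
      have hbmem : b ∈ (Finset.range q₁).filter (fun d => Nat.Coprime d q₁) := by
        simp only [Finset.mem_filter, Finset.mem_range]
        exact ⟨ZMod.val_lt w, val_coprime hq₁ w hwunit⟩
      rw [Finset.sum_eq_single_of_mem b hbmem ?_]
      · -- value at b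
        have hbinv : ((b : ℕ) : ZMod q₁)⁻¹ = -((d₁ : ZMod q₁)⁻¹) := by rw [hbz, hwinv]
        have hcondb : (q₁ : ℤ) ∣ ((((d₁ : ZMod q₁)⁻¹).val : ℤ)
            + ((((b : ℕ) : ZMod q₁)⁻¹).val : ℤ)) := by
          rw [← ZMod.intCast_zmod_eq_zero_iff_dvd]
          push_cast
          rw [ZMod.natCast_rightInverse ((d₁ : ZMod q₁)⁻¹),
            ZMod.natCast_rightInverse (((b : ℕ) : ZMod q₁)⁻¹), hbinv]
          simp
        rw [if_pos ((hcond _ _).mpr hcondb)]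
        congr 1
        have e1 : eZ (q₁ * q₁) ((q₁ : ℤ) * (a₁ * d₁) + (q₁ : ℤ) * (a₂ * b))
            = eZ q₁ (a₁ * d₁ + a₂ * b) := by
          rw [← eZ_scale q₁ q₁ hq₁.ne' (a₁ * d₁ + a₂ * b)]
          congr 1
          ring
        rw [e1]
        apply eZ_congr hq₁
        have hdb : (q₁ : ℤ) ∣ ((b : ℤ) + (d₁ : ℤ)) := by
          rw [← ZMod.intCast_zmod_eq_zero_iff_dvd]
          push_cast
          rw [hbz, hw]
          simp
        have hrw : a₁ * d₁ + a₂ * b - (a₁ - a₂) * d₁ = a₂ * ((b : ℤ) + (d₁ : ℤ)) := by ring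
        rw [hrw]
        exact hdb.mul_left a₂
      · -- other terms vanish
        intro c hc hne
        simp only [Finset.mem_filter, Finset.mem_range] at hc
        rw [if_neg, zero_mul]
        rw [hcond]
        intro hdd
        apply hne
        have hsum : (d₁ : ZMod q₁)⁻¹ + (c : ZMod q₁)⁻¹ = 0 := by
          have h0 := (ZMod.intCast_zmod_eq_zero_iff_dvd _ q₁).mpr hdd
          push_cast at h0
          rwa [ZMod.natCast_rightInverse ((d₁ : ZMod q₁)⁻¹),
            ZMod.natCast_rightInverse ((c : ZMod q₁)⁻¹)] at h0
        have huw : (c : ZMod q₁)⁻¹ = w⁻¹ := by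
          rw [hwinv]
          linear_combination hsum
        have hu : (c : ZMod q₁) * (c : ZMod q₁)⁻¹ = 1 := zmod_mul_inv hc.2
        have hww : w * w⁻¹ = 1 := ZMod.mul_inv_of_unit w hwunit
        have hcw : (c : ZMod q₁) = w := by
          calc (c : ZMod q₁) = (c : ZMod q₁) * (w * w⁻¹) := by rw [hww, mul_one]
          _ = w * ((c : ZMod q₁) * (c : ZMod q₁)⁻¹) := by rw [← huw]; ring
          _ = w := by rw [hu, mul_one]
        have hval : (c : ZMod q₁).val = w.val := by rw [hcw]
        rwa [ZMod.val_cast_of_lt hc.1] at hval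
    rw [Finset.sum_congr rfl step, ← Finset.mul_sum, ramanujan q₁ hq₁ (a₁ - a₂),
      show ((q₁ * q₁ : ℕ) : ℂ) = (q₁ : ℂ) ^ 2 from by push_cast; ring]
    congr 1
    refine Finset.sum_congr (Finset.filter_congr fun q' hq' => ?_) fun _ _ => rfl
    rw [Nat.mem_divisors] at hq'
    exact cond_iff q₁ q' hq₁ hq'.1 h₁ h₂ hc₁ hc₂
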